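/- The function W_0 : M^{3×2} → [0,+∞] defined by W_0(ξ) := inf_{ζ∈ℝ³} W(ξ|ζ) is continuous (as a map into the extended nonnegative reals). -/

import Mathlib

open scoped ENNReal
open MeasureTheory Filter

noncomputable section

attribute [local instance] Matrix.normedAddCommGroup

/-- `juxt ξ ζ` is the 3×3 matrix whose first two columns are the columns of the 3×2 matrix `ξ`
and whose third column is `ζ`, i.e. the matrix denoted `(ξ|ζ)` in the paper. -/
def juxt (ξ : Matrix (Fin 3) (Fin 2) ℝ) (ζ : Fin 3 → ℝ) : Matrix (Fin 3) (Fin 3) ℝ :=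
  Matrix.of fun i k => Fin.lastCases (ζ i) (fun j => ξ i j) k

/-- `W0 W ξ = inf_{ζ ∈ ℝ³} W (ξ|ζ)`. -/
def W0 (W : Matrix (Fin 3) (Fin 3) ℝ → ℝ≥0∞) (ξ : Matrix (Fin 3) (Fin 2) ℝ) : ℝ≥0∞ :=
  ⨅ ζ : Fin 3 → ℝ, W (juxt ξ ζ)

lemma continuous_juxt :
    Continuous fun q : Matrix (Fin 3) (Fin 2) ℝ × (Fin 3 → ℝ) => juxt q.1 q.2 := by
  refine continuous_pi fun i => continuous_pi fun k => ?_
  simp only [juxt, Matrix.of_apply]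
  rcases Fin.eq_castSucc_or_eq_last k with ⟨j, rfl⟩ | rfl
  · simp only [Fin.lastCases_castSucc]
    exact Continuous.comp (continuous_apply j)
      (Continuous.comp (continuous_apply (A := fun _ : Fin 3 => Fin 2 → ℝ) i) continuous_fst)
  · simp only [Fin.lastCases_last]
    exact (continuous_apply i).comp continuous_snd

lemma norm_le_juxt (ξ : Matrix (Fin 3) (Fin 2) ℝ) (ζ : Fin 3 → ℝ) : ‖ζ‖ ≤ ‖juxt ξ ζ‖ := by
  refine (pi_norm_le_iff_of_nonneg (norm_nonneg _)).2 fun i => ?_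
  have := Matrix.norm_entry_le_entrywise_sup_norm (juxt ξ ζ) (i := i) (j := Fin.last 2)
  simp only [juxt, Matrix.of_apply, Fin.lastCases_last] at this
  simpa [juxt] using this

/-- Lemma 2.2(i): `W₀` is continuous as a map into `[0,+∞]`. -/
theorem W0_continuous (p C : ℝ) (hp : 1 < p) (hC : 0 < C)
    (W : Matrix (Fin 3) (Fin 3) ℝ → ℝ≥0∞)
    (hWcont : Continuous W)
    (hWcoer : ∀ F : Matrix (Fin 3) (Fin 3) ℝ, ENNReal.ofReal (C * ‖F‖ ^ p) ≤ W F) :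
    Continuous (W0 W) := by
  have hp0 : (0:ℝ) < p := by linarith
  rw [continuous_iff_continuousAt]
  intro ξ₀
  rw [ContinuousAt, tendsto_order]
  constructor
  · -- lower semicontinuity
    intro a ha
    obtain ⟨b, hab, hb⟩ := exists_between ha
    have hbtop : b ≠ ⊤ := (hb.trans_le le_top).ne
    set R : ℝ := (b.toReal / C) ^ p⁻¹ with hRdef
    have hR0 : 0 ≤ R := Real.rpow_nonneg (by positivity) _
    have hcoer2 : ∀ ξ (ζ : Fin 3 → ℝ), R ≤ ‖ζ‖ → b ≤ W (juxt ξ ζ) := by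
      intro ξ ζ hζ
      refine le_trans ?_ (hWcoer _)
      have h1 : ‖ζ‖ ≤ ‖juxt ξ ζ‖ := norm_le_juxt ξ ζ
      have hRp : R ^ p = b.toReal / C :=
        Real.rpow_inv_rpow (by positivity) (ne_of_gt hp0)
      have h3 : R ^ p ≤ ‖juxt ξ ζ‖ ^ p :=
        Real.rpow_le_rpow hR0 (hζ.trans h1) hp0.le
      rw [hRp] at h3
      have h2 : b.toReal ≤ C * ‖juxt ξ ζ‖ ^ p := by
        have := mul_le_mul_of_nonneg_left h3 hC.le
        rwa [mul_div_cancel₀ _ (ne_of_gt hC)] at this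
      calc b = ENNReal.ofReal b.toReal := (ENNReal.ofReal_toReal hbtop).symm
        _ ≤ ENNReal.ofReal (C * ‖juxt ξ ζ‖ ^ p) := ENNReal.ofReal_le_ofReal h2
    have hK : IsCompact (Metric.closedBall (0 : Fin 3 → ℝ) R) :=
      isCompact_closedBall _ _
    have hO : IsOpen {q : Matrix (Fin 3) (Fin 2) ℝ × (Fin 3 → ℝ) | b < W (juxt q.1 q.2)} :=
      isOpen_Ioi.preimage (hWcont.comp continuous_juxt)
    have hsub : ({ξ₀} : Set (Matrix (Fin 3) (Fin 2) ℝ)) ×ˢ Metric.closedBall (0 : Fin 3 → ℝ) R ⊆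
        {q : Matrix (Fin 3) (Fin 2) ℝ × (Fin 3 → ℝ) | b < W (juxt q.1 q.2)} := by
      rintro ⟨ξ, ζ⟩ ⟨hξ, -⟩
      rcases hξ with rfl
      exact lt_of_lt_of_le hb (iInf_le _ ζ)
    obtain ⟨u, v, hu, hv, hξu, hKv, huv⟩ :=
      generalized_tube_lemma isCompact_singleton hK hO hsub
    refine Filter.eventually_of_mem (hu.mem_nhds (hξu rfl)) fun ξ hξ => ?_
    refine lt_of_lt_of_le hab (le_iInf fun ζ => ?_)
    by_cases hcase : ‖ζ‖ ≤ R
    · have hmem : (ξ, ζ) ∈ u ×ˢ v :=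
        ⟨hξ, hKv (by simpa [Metric.mem_closedBall, dist_zero_right] using hcase)⟩
      exact (huv hmem).le
    · exact hcoer2 ξ ζ (le_of_not_ge hcase)
  · -- upper semicontinuity
    intro a ha
    obtain ⟨ζ, hζ⟩ := iInf_lt_iff.1 ha
    have hcont : Continuous fun ξ => W (juxt ξ ζ) :=
      hWcont.comp (continuous_juxt.comp (continuous_id.prodMk continuous_const))
    have hop : IsOpen {ξ | W (juxt ξ ζ) < a} := isOpen_Iio.preimage hcont
    refine Filter.eventually_of_mem (hop.mem_nhds hζ) fun ξ hξ => ?_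
    exact lt_of_le_of_lt (iInf_le _ ζ) hξ
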